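/- Let x, y, w be three affinely independent points in the Euclidean plane ℝ², let z be their circumcenter (the unique point with dist(z,x) = dist(z,y) = dist(z,w)), and let p > 0. If dist(x,w) ≥ 2p, dist(y,w) ≥ 2p, and dist(x,w) ≥ dist(x,y), then the Euclidean distance from z to the line through x and y is at least p/2. -/

import Mathlib

set_option maxHeartbeats 1000000

open Metric EMetric
open scoped RealInnerProductSpace

private lemma aux_le_infDist {α : Type*} [MetricSpace α] {s : Set α} {z : α} {c : ℝ}
    (hc : 0 ≤ c) (hs : s.Nonempty) (h : ∀ q ∈ s, c ≤ dist z q) :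
    c ≤ Metric.infDist z s := by
  rw [Metric.infDist]
  have h1 : ENNReal.ofReal c ≤ Metric.infEDist z s := by
    rw [Metric.le_infEDist]
    intro q hq
    rw [edist_dist]
    exact ENNReal.ofReal_le_ofReal (h q hq)
  have h2 : Metric.infEDist z s ≠ ⊤ := Metric.infEDist_ne_top hs
  calc c = (ENNReal.ofReal c).toReal := (ENNReal.toReal_ofReal hc).symm
    _ ≤ _ := ENNReal.toReal_mono h2 h1

private lemma aux_key (bb cc ee p2 r2 : ℝ) (hcc : 0 < cc) (hccbb : cc ≤ bb)
    (hcs : ee ^ 2 < bb * cc) (hb : 4 * p2 ≤ bb) (ha : 4 * p2 ≤ bb + cc - 2 * ee)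
    (hp2 : 0 < p2) (hid : 4 * r2 * (bb * cc - ee ^ 2) = bb * cc * (bb + cc - 2 * ee)) :
    p2 ≤ 4 * r2 - cc := by
  have hD : 0 < bb * cc - ee ^ 2 := by linarith
  have hbb : 0 < bb := lt_of_lt_of_le hcc hccbb
  have hbe : 0 < bb - ee := by nlinarith
  have hdiff : (bb + cc - 2 * ee) * (bb * cc - ee ^ 2) ≤ 4 * cc * (bb - ee) ^ 2 := by
    nlinarith [mul_nonneg (sub_nonneg.2 hccbb) hD.le,
      mul_nonneg hbe.le (add_nonneg (mul_nonneg hcc.le (sub_nonneg.2 hccbb)) (sq_nonneg (ee - cc)))]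
  have h4 : (4 * r2 - cc) * (bb * cc - ee ^ 2) = cc * (bb - ee) ^ 2 := by
    linear_combination hid
  have h5 : p2 * (bb * cc - ee ^ 2) ≤ cc * (bb - ee) ^ 2 := by nlinarith
  have h6 : p2 * (bb * cc - ee ^ 2) ≤ (4 * r2 - cc) * (bb * cc - ee ^ 2) := by
    rw [h4]; exact h5
  exact le_of_mul_le_mul_right h6 hD

/-- Geometric core of Lemma 6.6: if `z` is the circumcenter of the triangle `xyw`,
the sides `xw` and `yw` have length at least `2p`, and `xw` is at least as long as
`xy`, then `z` is at distance at least `p/2` from the line through `x` and `y`. -/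
theorem stmt_9 (x y w z : EuclideanSpace ℝ (Fin 2)) (p : ℝ) (hp : 0 < p)
    (hindep : AffineIndependent ℝ ![x, y, w])
    (hzx : dist z x = dist z y) (hzw : dist z x = dist z w)
    (hxw : 2 * p ≤ dist x w) (hyw : 2 * p ≤ dist y w)
    (hxwxy : dist x y ≤ dist x w) :
    p / 2 ≤ Metric.infDist z (affineSpan ℝ {x, y} : Set (EuclideanSpace ℝ (Fin 2))) := by
  obtain ⟨u, hu⟩ : ∃ u : EuclideanSpace ℝ (Fin 2), u = y - x := ⟨_, rfl⟩
  obtain ⟨s, hs⟩ : ∃ s : EuclideanSpace ℝ (Fin 2), s = w - x := ⟨_, rfl⟩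
  obtain ⟨v, hv⟩ : ∃ v : EuclideanSpace ℝ (Fin 2), v = z - x := ⟨_, rfl⟩
  -- linear independence of u, s
  have hLI : LinearIndependent ℝ ![u, s] := by
    rw [LinearIndependent.pair_iff]
    intro a b hab
    have hsum : ∑ i, (![-a - b, a, b] : Fin 3 → ℝ) i = 0 := by
      simp [Fin.sum_univ_three]; ring
    have hcomb : ∑ i, (![-a - b, a, b] : Fin 3 → ℝ) i • (![x, y, w] : Fin 3 → EuclideanSpace ℝ (Fin 2)) i = 0 := by
      have : ∑ i, (![-a - b, a, b] : Fin 3 → ℝ) i • (![x, y, w] : Fin 3 → EuclideanSpace ℝ (Fin 2)) i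
          = a • u + b • s := by
        rw [hu, hs]
        simp [Fin.sum_univ_three, smul_sub, sub_smul, add_smul, neg_smul]
        abel
      rw [this, hab]
    have h1 := hindep.eq_zero_of_sum_eq_zero hsum hcomb 1 (Finset.mem_univ 1)
    have h2 := hindep.eq_zero_of_sum_eq_zero hsum hcomb 2 (Finset.mem_univ 2)
    exact ⟨by simpa using h1, by simpa using h2⟩
  have hpair := LinearIndependent.pair_iff.1 hLI
  have hu0 : u ≠ 0 := by
    intro h0
    exact one_ne_zero (hpair 1 0 (by simp [h0])).1
  have hs0 : s ≠ 0 := by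
    intro h0
    exact one_ne_zero (hpair 0 1 (by simp [h0])).2
  -- v is a combination of u and s
  have htop : Submodule.span ℝ (Set.range ![u, s]) = ⊤ :=
    hLI.span_eq_top_of_card_eq_finrank (by simp [finrank_euclideanSpace_fin])
  have hrange : Set.range ![u, s] = ({u, s} : Set (EuclideanSpace ℝ (Fin 2))) := by
    ext q
    simp [Fin.exists_fin_two]
    tauto
  have hvmem : v ∈ Submodule.span ℝ ({u, s} : Set (EuclideanSpace ℝ (Fin 2))) := by
    rw [← hrange, htop]
    trivial
  obtain ⟨α, β, hαβ⟩ := Submodule.mem_span_pair.1 hvmem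
  -- translate the metric hypotheses into inner products
  have hzy' : z - y = v - u := by rw [hv, hu]; abel
  have hzw' : z - w = v - s := by rw [hv, hs]; abel
  have hwy' : w - y = s - u := by rw [hs, hu]; abel
  have hnzx : dist z x = ‖v‖ := by rw [dist_eq_norm, ← hv]
  have hnzy : dist z y = ‖v - u‖ := by rw [dist_eq_norm, hzy']
  have hnzw : dist z w = ‖v - s‖ := by rw [dist_eq_norm, hzw']
  have hnxw : dist x w = ‖s‖ := by rw [dist_comm, dist_eq_norm, ← hs]
  have hnyw : dist y w = ‖s - u‖ := by rw [dist_comm, dist_eq_norm, hwy']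
  have hnxy : dist x y = ‖u‖ := by rw [dist_comm, dist_eq_norm, ← hu]
  have hvu : 2 * ⟪v, u⟫ = ⟪u, u⟫ := by
    have h1 : ‖v‖ ^ 2 = ‖v - u‖ ^ 2 := by rw [← hnzx, ← hnzy, hzx]
    rw [norm_sub_sq_real] at h1
    rw [real_inner_self_eq_norm_sq]
    linarith
  have hvs : 2 * ⟪v, s⟫ = ⟪s, s⟫ := by
    have h1 : ‖v‖ ^ 2 = ‖v - s‖ ^ 2 := by rw [← hnzx, ← hnzw, hzw]
    rw [norm_sub_sq_real] at h1
    rw [real_inner_self_eq_norm_sq]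
    linarith
  have hupos : 0 < ‖u‖ := norm_pos_iff.2 hu0
  have hcc : 0 < ⟪u, u⟫ := by rw [real_inner_self_eq_norm_sq]; exact pow_pos hupos 2
  have hbpos : 0 < ‖s‖ := norm_pos_iff.2 hs0
  have hb : 4 * p ^ 2 ≤ ⟪s, s⟫ := by
    rw [real_inner_self_eq_norm_sq]
    rw [hnxw] at hxw
    nlinarith
  have ha : 4 * p ^ 2 ≤ ⟪s, s⟫ + ⟪u, u⟫ - 2 * ⟪u, s⟫ := by
    have h1 : 4 * p ^ 2 ≤ ‖s - u‖ ^ 2 := by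
      rw [hnyw] at hyw
      nlinarith [norm_nonneg (s - u)]
    have h2 : ‖s - u‖ ^ 2 = ‖s‖ ^ 2 - 2 * ⟪s, u⟫ + ‖u‖ ^ 2 := norm_sub_sq_real s u
    have h3 : ⟪u, s⟫ = ⟪s, u⟫ := real_inner_comm s u
    have h4 : ⟪s, s⟫ = ‖s‖ ^ 2 := real_inner_self_eq_norm_sq s
    have h5 : ⟪u, u⟫ = ‖u‖ ^ 2 := real_inner_self_eq_norm_sq u
    linarith
  have hccbb : ⟪u, u⟫ ≤ ⟪s, s⟫ := by
    rw [real_inner_self_eq_norm_sq, real_inner_self_eq_norm_sq]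
    rw [hnxy, hnxw] at hxwxy
    nlinarith
  -- strict Cauchy-Schwarz
  have hbb : 0 < ⟪s, s⟫ := by nlinarith [mul_pos hp hp]
  have hCS : ⟪u, s⟫ ^ 2 < ⟪s, s⟫ * ⟪u, u⟫ := by
    have hq0 : ⟪s, s⟫ • u - ⟪u, s⟫ • s ≠ 0 := by
      intro h0
      have h0' : ⟪s, s⟫ • u + (-⟪u, s⟫) • s = 0 := by
        rw [neg_smul, ← sub_eq_add_neg]
        exact h0
      exact hbb.ne' (hpair _ _ h0').1
    have hqpos : 0 < ⟪⟪s, s⟫ • u - ⟪u, s⟫ • s, ⟪s, s⟫ • u - ⟪u, s⟫ • s⟫ := by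
      rw [real_inner_self_eq_norm_sq]
      exact pow_pos (norm_pos_iff.2 hq0) 2
    have hexp : ⟪⟪s, s⟫ • u - ⟪u, s⟫ • s, ⟪s, s⟫ • u - ⟪u, s⟫ • s⟫
        = ⟪s, s⟫ * (⟪s, s⟫ * ⟪u, u⟫ - ⟪u, s⟫ ^ 2) := by
      simp only [inner_sub_left, inner_sub_right, real_inner_smul_left,
        real_inner_smul_right, real_inner_comm u s]
      ring
    nlinarith [hqpos, hexp, hbb]
  -- the linear equations for α, β
  have hE1 : 2 * (α * ⟪u, u⟫ + β * ⟪u, s⟫) = ⟪u, u⟫ := by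
    rw [← hαβ, inner_add_left, real_inner_smul_left, real_inner_smul_left,
      real_inner_comm u s] at hvu
    linarith
  have hE2 : 2 * (α * ⟪u, s⟫ + β * ⟪s, s⟫) = ⟪s, s⟫ := by
    rw [← hαβ, inner_add_left, real_inner_smul_left, real_inner_smul_left] at hvs
    linarith
  have hvv : 2 * ⟪v, v⟫ = α * ⟪u, u⟫ + β * ⟪s, s⟫ := by
    have h1 : ⟪v, v⟫ = α ^ 2 * ⟪u, u⟫ + 2 * α * β * ⟪u, s⟫ + β ^ 2 * ⟪s, s⟫ := by
      rw [← hαβ]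
      simp only [inner_add_left, inner_add_right, real_inner_smul_left,
        real_inner_smul_right, real_inner_comm u s]
      ring
    linear_combination 2 * h1 + α * hE1 + β * hE2
  have hid : 4 * ⟪v, v⟫ * (⟪s, s⟫ * ⟪u, u⟫ - ⟪u, s⟫ ^ 2)
      = ⟪s, s⟫ * ⟪u, u⟫ * (⟪s, s⟫ + ⟪u, u⟫ - 2 * ⟪u, s⟫) := by
    linear_combination (⟪s, s⟫ * ⟪u, u⟫ - ⟪s, s⟫ * ⟪u, s⟫) * hE1
      + (⟪s, s⟫ * ⟪u, u⟫ - ⟪u, u⟫ * ⟪u, s⟫) * hE2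
      + 2 * (⟪s, s⟫ * ⟪u, u⟫ - ⟪u, s⟫ ^ 2) * hvv
  have hkey : p ^ 2 ≤ 4 * ⟪v, v⟫ - ⟪u, u⟫ :=
    aux_key (⟪s, s⟫) (⟪u, u⟫) (⟪u, s⟫) (p ^ 2) (⟪v, v⟫) hcc hccbb hCS hb
      (by linarith) (by positivity) hid
  -- conclude
  apply aux_le_infDist (by positivity)
    ⟨x, by simpa using left_mem_affineSpan_pair ℝ x y⟩
  intro q hq
  have hq' : q ∈ affineSpan ℝ ({x, y} : Set (EuclideanSpace ℝ (Fin 2))) := hq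
  have hqx : (q - x) +ᵥ x = q := by simp
  rw [← hqx] at hq'
  obtain ⟨t, ht⟩ := vadd_left_mem_affineSpan_pair.1 hq'
  have hyx : y -ᵥ x = u := by rw [hu]; rfl
  rw [hyx] at ht
  have hq2 : q = t • u + x := sub_eq_iff_eq_add.1 ht.symm
  have hzq : z - q = v - t • u := by
    rw [hv, hq2]; abel
  have hdzq : dist z q = ‖v - t • u‖ := by rw [dist_eq_norm, hzq]
  rw [hdzq]
  have hn2 : ‖v - t • u‖ ^ 2 = ⟪v, v⟫ - 2 * t * ⟪v, u⟫ + t ^ 2 * ⟪u, u⟫ := by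
    rw [norm_sub_sq_real, real_inner_smul_right, norm_smul, Real.norm_eq_abs,
      real_inner_self_eq_norm_sq v, real_inner_self_eq_norm_sq u,
      mul_pow, sq_abs]
    ring
  nlinarith [norm_nonneg (v - t • u), hn2, hkey, hvu, sq_nonneg (2 * t - 1), hcc, hp,
    sq_nonneg (2 * ‖v - t • u‖ - p)]
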